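/- arXiv:0706.1499 — 5 statements merged into one kernel-verified Lean document; each statement's English description precedes it below -/
import Mathlib

section
/- Let T = Tri(A, M, B) be a triangular algebra satisfying conditions (i) and (ii), R' an arbitrary ring, and (M, M*) an elementary map on T × R' with M and M* bijective. If a, b, c ∈ T satisfy M(c) = M(a) + M(b), then for all s, t ∈ T one has M*⁻¹(s c t) = M*⁻¹(s a t) + M*⁻¹(s b t). -/
open MulOpposite

/-- The triangular algebra `Tri(A, M, B)`: formal 2×2 matrices `[[a, m],[0, b]]`
with `a ∈ A`, `m ∈ M`, `b ∈ B`. -/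
structure Tri (A M B : Type*) where
  fst : A
  mid : M
  snd : B

namespace Tri

variable {A M B : Type*}

instance [Add A] [Add M] [Add B] : Add (Tri A M B) :=
  ⟨fun x y => ⟨x.fst + y.fst, x.mid + y.mid, x.snd + y.snd⟩⟩

instance [Zero A] [Zero M] [Zero B] : Zero (Tri A M B) :=
  ⟨⟨0, 0, 0⟩⟩

/-- The usual matrix multiplication:
`[[a, m],[0, b]] * [[a', m'],[0, b']] = [[a a', a • m' + m • b'],[0, b b']]`,
where the right action of `B` on `M` is encoded via `Bᵐᵒᵖ`. -/
instance [Mul A] [Mul B] [Add M] [SMul A M] [SMul Bᵐᵒᵖ M] : Mul (Tri A M B) :=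
  ⟨fun x y => ⟨x.fst * y.fst, x.fst • y.mid + op y.snd • x.mid, x.snd * y.snd⟩⟩

end Tri

/-- `(f, g)` is an elementary map on `T × S`:
`f (a g(x) b) = f(a) x f(b)` and `g (x f(a) y) = g(x) a g(y)`. -/
def IsElementaryMap {T S : Type*} [Mul T] [Mul S] (f : T → S) (g : S → T) : Prop :=
  (∀ (a b : T) (x : S), f (a * g x * b) = f a * x * f b) ∧
  (∀ (x y : S) (a : T), g (x * f a * y) = g x * a * g y)

/-- If `M(c) = M(a) + M(b)`, then `M*⁻¹(s c t) = M*⁻¹(s a t) + M*⁻¹(s b t)`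
for all `s, t ∈ T`. -/
theorem elementary_map_key_lemma
    {R A B M R' : Type*} [CommRing R]
    [NonUnitalRing A] [Module R A] [SMulCommClass R A A] [IsScalarTower R A A]
    [NonUnitalRing B] [Module R B] [SMulCommClass R B B] [IsScalarTower R B B]
    [AddCommGroup M] [Module R M]
    [DistribSMul A M] [IsScalarTower A A M]
    [DistribSMul Bᵐᵒᵖ M] [IsScalarTower Bᵐᵒᵖ Bᵐᵒᵖ M]
    [SMulCommClass A Bᵐᵒᵖ M]
    (add_smul_left : ∀ (a₁ a₂ : A) (m : M), (a₁ + a₂) • m = a₁ • m + a₂ • m)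
    (add_smul_right : ∀ (b₁ b₂ : Bᵐᵒᵖ) (m : M), (b₁ + b₂) • m = b₁ • m + b₂ • m)
    (hfaithfulA : ∀ a : A, (∀ m : M, a • m = 0) → a = 0)
    (hfaithfulB : ∀ b : Bᵐᵒᵖ, (∀ m : M, b • m = 0) → b = 0)
    (hA : ∀ a : A, ((∀ x : A, a * x = 0) ∨ (∀ x : A, x * a = 0)) → a = 0)
    (hB : ∀ b : B, ((∀ x : B, b * x = 0) ∨ (∀ x : B, x * b = 0)) → b = 0)
    [NonUnitalRing R']
    (f : Tri A M B → R') (g : R' → Tri A M B)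
    (hf : Function.Bijective f) (hg : Function.Bijective g)
    (g' : Tri A M B → R')
    (hg'₁ : ∀ x : R', g' (g x) = x) (hg'₂ : ∀ t : Tri A M B, g (g' t) = t)
    (helem : IsElementaryMap f g)
    (a b c : Tri A M B) (h : f c = f a + f b) :
    ∀ s t : Tri A M B, g' (s * c * t) = g' (s * a * t) + g' (s * b * t) := by
  intro s t
  have key : ∀ x : Tri A M B, g' (s * x * t) = g' s * f x * g' t := by
    intro x
    conv_lhs => rw [← hg'₂ s, ← hg'₂ t, ← helem.2, hg'₁]
  rw [key, key, key, h, mul_add, add_mul]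
end

section
/- Let T = Tri(A, M, B) be a triangular algebra satisfying conditions (i) and (ii), R' an arbitrary ring, and (M, M*) an elementary map on T × R' with M and M* bijective. Then for all t₁₁, a₁₁ ∈ T₁₁, b₁₂, c₁₂ ∈ T₁₂, and d₂₂ ∈ T₂₂: (i) M(t₁₁ a₁₁ b₁₂ + t₁₁ c₁₂ d₂₂) = M(t₁₁ a₁₁ b₁₂) + M(t₁₁ c₁₂ d₂₂); (ii) M*⁻¹(t₁₁ a₁₁ b₁₂ + t₁₁ c₁₂ d₂₂) = M*⁻¹(t₁₁ a₁₁ b₁₂) + M*⁻¹(t₁₁ c₁₂ d₂₂). -/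
open MulOpposite

namespace Tri

theorem mk_mul_mk {A M B : Type*} [Mul A] [Mul B] [Add M] [SMul A M] [SMul Bᵐᵒᵖ M]
    (a a' : A) (m m' : M) (b b' : B) :
    Tri.mk a m b * Tri.mk a' m' b' = Tri.mk (a * a') (a • m' + op b' • m) (b * b') := rfl

theorem mk_add_mk {A M B : Type*} [Add A] [Add M] [Add B] (a a' : A) (m m' : M) (b b' : B) :
    Tri.mk a m b + Tri.mk a' m' b' = Tri.mk (a + a') (m + m') (b + b') := rfl

theorem zero_def {A M B : Type*} [Zero A] [Zero M] [Zero B] :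
    (0 : Tri A M B) = Tri.mk 0 0 0 := rfl

end Tri

/-- `M` and `M*⁻¹` are additive on sums of the form `t₁₁ a₁₁ b₁₂ + t₁₁ c₁₂ d₂₂`. -/
theorem elementary_map_add_products
    {R A B M R' : Type*} [CommRing R]
    [NonUnitalRing A] [Module R A] [SMulCommClass R A A] [IsScalarTower R A A]
    [NonUnitalRing B] [Module R B] [SMulCommClass R B B] [IsScalarTower R B B]
    [AddCommGroup M] [Module R M]
    [DistribSMul A M] [IsScalarTower A A M]
    [DistribSMul Bᵐᵒᵖ M] [IsScalarTower Bᵐᵒᵖ Bᵐᵒᵖ M]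
    [SMulCommClass A Bᵐᵒᵖ M]
    (add_smul_left : ∀ (a₁ a₂ : A) (m : M), (a₁ + a₂) • m = a₁ • m + a₂ • m)
    (add_smul_right : ∀ (b₁ b₂ : Bᵐᵒᵖ) (m : M), (b₁ + b₂) • m = b₁ • m + b₂ • m)
    (hfaithfulA : ∀ a : A, (∀ m : M, a • m = 0) → a = 0)
    (hfaithfulB : ∀ b : Bᵐᵒᵖ, (∀ m : M, b • m = 0) → b = 0)
    (hA : ∀ a : A, ((∀ x : A, a * x = 0) ∨ (∀ x : A, x * a = 0)) → a = 0)
    (hB : ∀ b : B, ((∀ x : B, b * x = 0) ∨ (∀ x : B, x * b = 0)) → b = 0)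
    [NonUnitalRing R']
    (f : Tri A M B → R') (g : R' → Tri A M B)
    (hf : Function.Bijective f) (hg : Function.Bijective g)
    (g' : Tri A M B → R')
    (hg'₁ : ∀ x : R', g' (g x) = x) (hg'₂ : ∀ t : Tri A M B, g (g' t) = t)
    (helem : IsElementaryMap f g)
    :
    ∀ (t a : A) (b c : M) (d : B),
      f (Tri.mk t 0 0 * Tri.mk a 0 0 * Tri.mk 0 b 0 +
          Tri.mk t 0 0 * Tri.mk 0 c 0 * Tri.mk 0 0 d) =
        f (Tri.mk t 0 0 * Tri.mk a 0 0 * Tri.mk 0 b 0) +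
          f (Tri.mk t 0 0 * Tri.mk 0 c 0 * Tri.mk 0 0 d) ∧
      g' (Tri.mk t 0 0 * Tri.mk a 0 0 * Tri.mk 0 b 0 +
          Tri.mk t 0 0 * Tri.mk 0 c 0 * Tri.mk 0 0 d) =
        g' (Tri.mk t 0 0 * Tri.mk a 0 0 * Tri.mk 0 b 0) +
          g' (Tri.mk t 0 0 * Tri.mk 0 c 0 * Tri.mk 0 0 d) := by
  intro t a b c d
  -- zero • m = 0 for both scalar types
  have zsA : ∀ m : M, (0 : A) • m = 0 := by
    intro m
    have h := add_smul_left 0 0 m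
    rw [add_zero] at h
    have h2 : (0 : A) • m + (0 : A) • m = (0 : A) • m + 0 := by
      rw [add_zero]; exact h.symm
    exact add_left_cancel h2
  have zsB : ∀ m : M, (0 : Bᵐᵒᵖ) • m = 0 := by
    intro m
    have h := add_smul_right 0 0 m
    rw [add_zero] at h
    have h2 : (0 : Bᵐᵒᵖ) • m + (0 : Bᵐᵒᵖ) • m = (0 : Bᵐᵒᵖ) • m + 0 := by
      rw [add_zero]; exact h.symm
    exact add_left_cancel h2
  -- triple-product computations
  have tripleL : ∀ (e : A) (z : Tri A M B) (m : M) (d' : B),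
      Tri.mk e 0 0 * z * Tri.mk 0 m d' =
        Tri.mk 0 ((e * z.fst) • m + op d' • (e • z.mid)) 0 := by
    intro e z m d'
    obtain ⟨z1, z2, z3⟩ := z
    simp [Tri.mk_mul_mk, zsA, zsB, smul_zero, mul_zero, zero_mul]
  have tripleAA : ∀ (e e' : A) (z : Tri A M B),
      Tri.mk e 0 0 * z * Tri.mk e' 0 0 = Tri.mk (e * z.fst * e') 0 0 := by
    intro e e' z
    obtain ⟨z1, z2, z3⟩ := z
    simp [Tri.mk_mul_mk, zsA, zsB, smul_zero, mul_zero, zero_mul]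
  have tmul0 : ∀ x : Tri A M B, x * 0 = 0 := by
    intro x
    obtain ⟨x1, x2, x3⟩ := x
    simp [Tri.zero_def, Tri.mk_mul_mk, zsB, smul_zero, mul_zero]
  have t0mul : ∀ x : Tri A M B, (0 : Tri A M B) * x = 0 := by
    intro x
    obtain ⟨x1, x2, x3⟩ := x
    simp [Tri.zero_def, Tri.mk_mul_mk, zsA, smul_zero, zero_mul]
  have f0 : f 0 = 0 := by
    have h := helem.1 0 0 0
    rw [t0mul, tmul0] at h
    simpa using h
  have g0 : g 0 = 0 := by
    have h := helem.2 0 0 0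
    rw [zero_mul, zero_mul, tmul0, t0mul] at h
    exact h
  -- canonical forms of the products in the statement
  have e1 : Tri.mk t (0:M) (0:B) * Tri.mk a 0 0 * Tri.mk 0 b 0 =
      Tri.mk (0:A) ((t * a) • b) (0:B) := by
    rw [tripleL]; simp [smul_zero]
  have e2 : Tri.mk t (0:M) (0:B) * Tri.mk 0 c 0 * Tri.mk 0 0 d =
      Tri.mk (0:A) (op d • (t • c)) (0:B) := by
    rw [tripleL]; simp [smul_zero]
  have e4 : Tri.mk t (0:M) (0:B) * Tri.mk a 0 0 * Tri.mk 0 b 0 =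
      Tri.mk t 0 0 * Tri.mk a 0 0 * Tri.mk 0 b d := by
    rw [e1, tripleL]; simp [smul_zero]
  have e5 : Tri.mk t (0:M) (0:B) * Tri.mk 0 c 0 * Tri.mk 0 0 d =
      Tri.mk t 0 0 * Tri.mk 0 c 0 * Tri.mk 0 b d := by
    rw [e2, tripleL]; simp [zsA, smul_zero, mul_zero]
  have e3 : Tri.mk t (0:M) (0:B) * Tri.mk a 0 0 * Tri.mk 0 b 0 +
      Tri.mk t 0 0 * Tri.mk 0 c 0 * Tri.mk 0 0 d =
      Tri.mk t 0 0 * Tri.mk a c 0 * Tri.mk 0 b d := by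
    rw [e1, e2, tripleL, Tri.mk_add_mk]; simp
  -- the common component analysis
  have main : ∀ Z : Tri A M B,
      (∀ p q : Tri A M B, p * Tri.mk (0:A) c 0 * q = 0 →
        p * Z * q = p * Tri.mk a (0:M) 0 * q) →
      (∀ p q : Tri A M B, p * Tri.mk a (0:M) 0 * q = 0 →
        p * Z * q = p * Tri.mk (0:A) c 0 * q) →
      Tri.mk t (0:M) (0:B) * Z * Tri.mk (0:A) b d =
        Tri.mk t 0 0 * Tri.mk a c 0 * Tri.mk 0 b d := by
    intro Z H1 H2
    have hfst : Z.fst = a := by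
      have k1 : ∀ e e' : A, e * Z.fst * e' = e * a * e' := by
        intro e e'
        have h0 : Tri.mk e (0:M) (0:B) * Tri.mk (0:A) c 0 * Tri.mk e' (0:M) (0:B) = 0 := by
          rw [tripleAA]; simp [Tri.zero_def, mul_zero, zero_mul]
        have h1 := H1 _ _ h0
        rw [tripleAA, tripleAA] at h1
        simpa using congrArg Tri.fst h1
      have k2 : ∀ e' : A, Z.fst * e' = a * e' := by
        intro e'
        have k3 : ∀ e : A, e * (Z.fst * e' - a * e') = 0 := by
          intro e
          rw [mul_sub, ← mul_assoc, ← mul_assoc, k1, sub_self]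
        exact sub_eq_zero.mp (hA _ (Or.inr k3))
      have k4 : ∀ e' : A, (Z.fst - a) * e' = 0 := by
        intro e'
        rw [sub_mul, k2, sub_self]
      exact sub_eq_zero.mp (hA _ (Or.inl k4))
    have hmid : op d • (t • Z.mid) = op d • (t • c) := by
      have h0 : Tri.mk t (0:M) (0:B) * Tri.mk a (0:M) 0 * Tri.mk (0:A) (0:M) d = 0 := by
        rw [tripleL]; simp [Tri.zero_def, smul_zero]
      have h1 := H2 _ _ h0
      rw [tripleL, tripleL] at h1
      have h2 := congrArg Tri.mid h1
      simpa [smul_zero, mul_zero, zsA] using h2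
    rw [tripleL, tripleL]
    simp [hfst, hmid]
  constructor
  · -- part (i)
    have star : ∀ p q : Tri A M B,
        f (p * g (g' (Tri.mk a (0:M) (0:B)) + g' (Tri.mk (0:A) c (0:B))) * q) =
          f (p * Tri.mk a (0:M) 0 * q) + f (p * Tri.mk (0:A) c 0 * q) := by
      intro p q
      rw [helem.1 p q, mul_add, add_mul,
        ← helem.1 p q (g' (Tri.mk a (0:M) (0:B))),
        ← helem.1 p q (g' (Tri.mk (0:A) c (0:B))), hg'₂, hg'₂]
    have H1 : ∀ p q : Tri A M B, p * Tri.mk (0:A) c 0 * q = 0 →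
        p * g (g' (Tri.mk a (0:M) (0:B)) + g' (Tri.mk (0:A) c (0:B))) * q =
          p * Tri.mk a (0:M) 0 * q := by
      intro p q h0
      apply hf.1
      rw [star p q, h0, f0, add_zero]
    have H2 : ∀ p q : Tri A M B, p * Tri.mk a (0:M) 0 * q = 0 →
        p * g (g' (Tri.mk a (0:M) (0:B)) + g' (Tri.mk (0:A) c (0:B))) * q =
          p * Tri.mk (0:A) c 0 * q := by
      intro p q h0
      apply hf.1
      rw [star p q, h0, f0, zero_add]
    have kz := main _ H1 H2
    calc f (Tri.mk t (0:M) (0:B) * Tri.mk a 0 0 * Tri.mk 0 b 0 +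
          Tri.mk t 0 0 * Tri.mk 0 c 0 * Tri.mk 0 0 d)
        = f (Tri.mk t 0 0 * Tri.mk a c 0 * Tri.mk 0 b d) := by rw [e3]
      _ = f (Tri.mk t (0:M) (0:B) *
            g (g' (Tri.mk a (0:M) (0:B)) + g' (Tri.mk (0:A) c (0:B))) * Tri.mk 0 b d) := by
          rw [kz]
      _ = f (Tri.mk t (0:M) (0:B) * Tri.mk a (0:M) 0 * Tri.mk 0 b d) +
            f (Tri.mk t 0 0 * Tri.mk (0:A) c 0 * Tri.mk 0 b d) := star _ _
      _ = f (Tri.mk t (0:M) (0:B) * Tri.mk a 0 0 * Tri.mk 0 b 0) +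
            f (Tri.mk t 0 0 * Tri.mk 0 c 0 * Tri.mk 0 0 d) := by rw [← e4, ← e5]
  · -- part (ii)
    obtain ⟨ζ, hζ⟩ := hf.2 (f (Tri.mk a (0:M) (0:B)) + f (Tri.mk (0:A) c (0:B)))
    have star2 : ∀ p q : Tri A M B,
        p * ζ * q = g (g' p * f (Tri.mk a (0:M) (0:B)) * g' q +
          g' p * f (Tri.mk (0:A) c (0:B)) * g' q) := by
      intro p q
      have h := helem.2 (g' p) (g' q) ζ
      rw [hg'₂, hg'₂] at h
      rw [← h, hζ, mul_add, add_mul]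
    have H1 : ∀ p q : Tri A M B, p * Tri.mk (0:A) c 0 * q = 0 →
        p * ζ * q = p * Tri.mk a (0:M) 0 * q := by
      intro p q h0
      have hzero : g' p * f (Tri.mk (0:A) c (0:B)) * g' q = 0 := by
        apply hg.1
        rw [helem.2, hg'₂, hg'₂, h0, g0]
      rw [star2 p q, hzero, add_zero, helem.2, hg'₂, hg'₂]
    have H2 : ∀ p q : Tri A M B, p * Tri.mk a (0:M) 0 * q = 0 →
        p * ζ * q = p * Tri.mk (0:A) c 0 * q := by
      intro p q h0
      have hzero : g' p * f (Tri.mk a (0:M) (0:B)) * g' q = 0 := by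
        apply hg.1
        rw [helem.2, hg'₂, hg'₂, h0, g0]
      rw [star2 p q, hzero, zero_add, helem.2, hg'₂, hg'₂]
    have kz := main ζ H1 H2
    have r0 : g (g' (Tri.mk t 0 0 : Tri A M B) * f ζ * g' (Tri.mk (0:A) b d)) =
        Tri.mk t (0:M) (0:B) * ζ * Tri.mk (0:A) b d := by
      rw [helem.2, hg'₂, hg'₂]
    have rP : g' (Tri.mk t (0:M) (0:B) * Tri.mk a (0:M) 0 * Tri.mk (0:A) b d) =
        g' (Tri.mk t 0 0 : Tri A M B) * f (Tri.mk a (0:M) (0:B)) * g' (Tri.mk (0:A) b d) := by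
      have h : g (g' (Tri.mk t 0 0 : Tri A M B) * f (Tri.mk a (0:M) (0:B)) *
          g' (Tri.mk (0:A) b d)) = Tri.mk t (0:M) (0:B) * Tri.mk a (0:M) 0 * Tri.mk (0:A) b d := by
        rw [helem.2, hg'₂, hg'₂]
      rw [← h, hg'₁]
    have rQ : g' (Tri.mk t (0:M) (0:B) * Tri.mk (0:A) c 0 * Tri.mk (0:A) b d) =
        g' (Tri.mk t 0 0 : Tri A M B) * f (Tri.mk (0:A) c (0:B)) * g' (Tri.mk (0:A) b d) := by
      have h : g (g' (Tri.mk t 0 0 : Tri A M B) * f (Tri.mk (0:A) c (0:B)) *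
          g' (Tri.mk (0:A) b d)) = Tri.mk t (0:M) (0:B) * Tri.mk (0:A) c 0 * Tri.mk (0:A) b d := by
        rw [helem.2, hg'₂, hg'₂]
      rw [← h, hg'₁]
    calc g' (Tri.mk t (0:M) (0:B) * Tri.mk a 0 0 * Tri.mk 0 b 0 +
          Tri.mk t 0 0 * Tri.mk 0 c 0 * Tri.mk 0 0 d)
        = g' (Tri.mk t (0:M) (0:B) * ζ * Tri.mk (0:A) b d) := by rw [e3, ← kz]
      _ = g' (g (g' (Tri.mk t 0 0 : Tri A M B) * f ζ * g' (Tri.mk (0:A) b d))) := by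
          rw [r0]
      _ = g' (Tri.mk t 0 0 : Tri A M B) * f ζ * g' (Tri.mk (0:A) b d) := hg'₁ _
      _ = g' (Tri.mk t 0 0 : Tri A M B) * f (Tri.mk a (0:M) (0:B)) * g' (Tri.mk (0:A) b d) +
            g' (Tri.mk t 0 0 : Tri A M B) * f (Tri.mk (0:A) c (0:B)) * g' (Tri.mk (0:A) b d) := by
          rw [hζ, mul_add, add_mul]
      _ = g' (Tri.mk t (0:M) (0:B) * Tri.mk a 0 0 * Tri.mk 0 b 0) +
            g' (Tri.mk t 0 0 * Tri.mk 0 c 0 * Tri.mk 0 0 d) := by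
          rw [e4, e5, rP, rQ]
end

section
/- Let A and B be unital algebras over a commutative ring R, M an (A,B)-bimodule faithful as a left A-module and as a right B-module, T = Tri(A, M, B) the triangular algebra, and R' an arbitrary ring. If (M, M*) is an elementary map on T × R' with both M and M* surjective, then both M and M* are additive. -/
open MulOpposite

set_option linter.unusedSectionVars false

namespace Tri

variable {A M B : Type*}

@[ext] theorem ext' {x y : Tri A M B} (h1 : x.fst = y.fst) (h2 : x.mid = y.mid)
    (h3 : x.snd = y.snd) : x = y := by
  cases x; cases y; simp_all

section ops

variable [Add A] [Add M] [Add B] [Zero A] [Zero M] [Zero B]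

@[simp] theorem add_fst (x y : Tri A M B) : (x + y).fst = x.fst + y.fst := rfl
@[simp] theorem add_mid (x y : Tri A M B) : (x + y).mid = x.mid + y.mid := rfl
@[simp] theorem add_snd (x y : Tri A M B) : (x + y).snd = x.snd + y.snd := rfl
@[simp] theorem zero_fst : (0 : Tri A M B).fst = 0 := rfl
@[simp] theorem zero_mid : (0 : Tri A M B).mid = 0 := rfl
@[simp] theorem zero_snd : (0 : Tri A M B).snd = 0 := rfl

end ops

section mulops

variable [Mul A] [Mul B] [Add M] [SMul A M] [SMul Bᵐᵒᵖ M]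

@[simp] theorem mul_fst (x y : Tri A M B) : (x * y).fst = x.fst * y.fst := rfl
@[simp] theorem mul_mid (x y : Tri A M B) :
    (x * y).mid = x.fst • y.mid + op y.snd • x.mid := rfl
@[simp] theorem mul_snd (x y : Tri A M B) : (x * y).snd = x.snd * y.snd := rfl

end mulops

section ring

variable [Ring A] [Ring B] [AddCommGroup M]
  [Module A M] [Module Bᵐᵒᵖ M] [SMulCommClass A Bᵐᵒᵖ M]

instance : Neg (Tri A M B) := ⟨fun x => ⟨-x.fst, -x.mid, -x.snd⟩⟩

@[simp] theorem neg_fst (x : Tri A M B) : (-x).fst = -x.fst := rfl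
@[simp] theorem neg_mid (x : Tri A M B) : (-x).mid = -x.mid := rfl
@[simp] theorem neg_snd (x : Tri A M B) : (-x).snd = -x.snd := rfl

instance : AddCommGroup (Tri A M B) where
  add_assoc a b c := by ext <;> simp [add_assoc]
  zero_add a := by ext <;> simp
  add_zero a := by ext <;> simp
  add_comm a b := by ext <;> simp [add_comm]
  neg_add_cancel a := by ext <;> simp
  nsmul := nsmulRec
  zsmul := zsmulRec

instance : One (Tri A M B) := ⟨⟨1, 0, 1⟩⟩

@[simp] theorem one_fst' : (1 : Tri A M B).fst = 1 := rfl
@[simp] theorem one_mid' : (1 : Tri A M B).mid = 0 := rfl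
@[simp] theorem one_snd' : (1 : Tri A M B).snd = 1 := rfl

instance : Ring (Tri A M B) :=
  { (inferInstance : AddCommGroup (Tri A M B)) with
    mul := (· * ·)
    one := 1
    mul_assoc := fun x y z => by
      ext
      · simp [mul_assoc]
      · haveI : SMulCommClass Bᵐᵒᵖ A M := SMulCommClass.symm _ _ _
        simp only [mul_mid, mul_fst, mul_snd, smul_add, mul_smul, op_mul]
        rw [smul_comm (op z.snd) x.fst]
        abel
      · simp [mul_assoc]
    one_mul := fun x => by
      ext <;> simp
    mul_one := fun x => by
      ext <;> simp
    left_distrib := fun x y z => by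
      ext <;> simp [mul_add, smul_add, add_smul] <;> abel
    right_distrib := fun x y z => by
      ext <;> simp [add_mul, smul_add, add_smul] <;> abel
    zero_mul := fun x => by ext <;> simp
    mul_zero := fun x => by ext <;> simp }

/-- Corner idempotents. -/
def E1 : Tri A M B := ⟨1, 0, 0⟩
def E2 : Tri A M B := ⟨0, 0, 1⟩

@[simp] theorem E1_fst : (E1 : Tri A M B).fst = 1 := rfl
@[simp] theorem E1_mid : (E1 : Tri A M B).mid = 0 := rfl
@[simp] theorem E1_snd : (E1 : Tri A M B).snd = 0 := rfl
@[simp] theorem E2_fst : (E2 : Tri A M B).fst = 0 := rfl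
@[simp] theorem E2_mid : (E2 : Tri A M B).mid = 0 := rfl
@[simp] theorem E2_snd : (E2 : Tri A M B).snd = 1 := rfl

theorem corner11 (w : Tri A M B) : E1 * w * E1 = ⟨w.fst, 0, 0⟩ := by ext <;> simp
theorem corner12 (w : Tri A M B) : E1 * w * E2 = ⟨0, w.mid, 0⟩ := by ext <;> simp
theorem corner22 (w : Tri A M B) : E2 * w * E2 = ⟨0, 0, w.snd⟩ := by ext <;> simp

theorem eq_of_corners {w w' : Tri A M B} (h11 : E1 * w * E1 = E1 * w' * E1)
    (h12 : E1 * w * E2 = E1 * w' * E2) (h22 : E2 * w * E2 = E2 * w' * E2) : w = w' := by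
  rw [corner11, corner11] at h11
  rw [corner12, corner12] at h12
  rw [corner22, corner22] at h22
  rw [Tri.mk.injEq] at h11 h12 h22
  ext
  · exact h11.1
  · exact h12.2.1
  · exact h22.2.2

end ring

end Tri

namespace ElementaryAux

open Tri

variable {A M B R' : Type*} [Ring A] [Ring B] [AddCommGroup M]
  [Module A M] [Module Bᵐᵒᵖ M] [SMulCommClass A Bᵐᵒᵖ M] [NonUnitalRing R']

/-- A symmetric pair of maps satisfying the derived elementary identities. -/
structure Pack (f h : Tri A M B → R') : Prop where
  H1 : ∀ a u b : Tri A M B, f (a * u * b) = f a * h u * f b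
  H2 : ∀ u a v : Tri A M B, h (u * a * v) = h u * f a * h v
  finj : Function.Injective f
  hinj : Function.Injective h
  fsurj : Function.Surjective f
  hsurj : Function.Surjective h

variable {f h : Tri A M B → R'}

theorem Pack.symm (p : Pack f h) : Pack h f :=
  ⟨p.H2, p.H1, p.hinj, p.finj, p.hsurj, p.fsurj⟩

theorem Pack.f0 (p : Pack f h) : f 0 = 0 := by
  obtain ⟨u, hu⟩ := p.hsurj 0
  have := p.H1 0 u 0
  rw [zero_mul, zero_mul, hu, mul_zero, zero_mul] at this
  exact this

theorem Pack.h0 (p : Pack f h) : h 0 = 0 := p.symm.f0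

/-- Decomposition: `f w` splits along the Peirce corners of `w`. -/
theorem Pack.decomp (p : Pack f h) (w : Tri A M B) :
    f w = f ⟨w.fst, 0, 0⟩ + f ⟨0, w.mid, 0⟩ + f ⟨0, 0, w.snd⟩ := by
  obtain ⟨w', hw'⟩ := p.fsurj (f ⟨w.fst, 0, 0⟩ + f ⟨0, w.mid, 0⟩ + f ⟨0, 0, w.snd⟩)
  have P : ∀ u v : Tri A M B, h (u * w' * v) =
      h (u * ⟨w.fst, 0, 0⟩ * v) + h (u * ⟨0, w.mid, 0⟩ * v) + h (u * ⟨0, 0, w.snd⟩ * v) := by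
    intro u v
    rw [p.H2, hw', mul_add, mul_add, add_mul, add_mul, ← p.H2, ← p.H2, ← p.H2]
  have e11 := P E1 E1
  have e12 := P E1 E2
  have e22 := P E2 E2
  rw [corner11, corner11, corner11, corner11] at e11
  rw [corner12, corner12, corner12, corner12] at e12
  rw [corner22, corner22, corner22, corner22] at e22
  simp only [show (⟨(0:A), (0:M), (0:B)⟩ : Tri A M B) = 0 from rfl, p.h0] at e11 e12 e22
  rw [add_zero, add_zero] at e11
  rw [zero_add, add_zero] at e12
  rw [zero_add, zero_add] at e22
  have hw : w' = w := by
    ext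
    · have := p.hinj e11; rw [Tri.mk.injEq] at this; exact this.1
    · have := p.hinj e12; rw [Tri.mk.injEq] at this; exact this.2.1
    · have := p.hinj e22; rw [Tri.mk.injEq] at this; exact this.2.2
  rw [hw] at hw'
  exact hw'

/-- Additivity of `f` on the middle (module) corner. -/
theorem Pack.addM (p : Pack f h) (m m' : M) :
    f ⟨0, m + m', 0⟩ = f ⟨0, m, 0⟩ + f ⟨0, m', 0⟩ := by
  have key : (⟨0, m + m', 0⟩ : Tri A M B) = ⟨1, m, 0⟩ * 1 * ⟨0, m', 1⟩ := by
    ext <;> simp [add_comm]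
  rw [key, p.H1]
  have d1 := p.decomp ⟨1, m, 0⟩
  have d2 := p.decomp ⟨0, m', 1⟩
  simp only [show (⟨(0:A), (0:M), (0:B)⟩ : Tri A M B) = 0 from rfl, p.f0] at d1 d2
  rw [add_zero] at d1
  rw [zero_add] at d2
  rw [d1, d2, add_mul, mul_add, add_mul, add_mul, ← p.H1, ← p.H1, ← p.H1, ← p.H1]
  have c1 : (⟨(1:A), (0:M), (0:B)⟩ : Tri A M B) * 1 * ⟨0, m', 0⟩ = ⟨0, m', 0⟩ := by
    ext <;> simp
  have c2 : (⟨(1:A), (0:M), (0:B)⟩ : Tri A M B) * 1 * ⟨0, 0, 1⟩ = 0 := by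
    ext <;> simp
  have c3 : (⟨(0:A), m, (0:B)⟩ : Tri A M B) * 1 * ⟨0, m', 0⟩ = 0 := by
    ext <;> simp
  have c4 : (⟨(0:A), m, (0:B)⟩ : Tri A M B) * 1 * ⟨0, 0, 1⟩ = ⟨0, m, 0⟩ := by
    ext <;> simp
  rw [c1, c2, c3, c4, p.f0]
  abel

/-- Additivity of `f` on the `A` corner, via faithfulness. -/
theorem Pack.addA (p : Pack f h)
    (hfA : ∀ a : A, (∀ m : M, a • m = 0) → a = 0) (a a' : A) :
    f ⟨a + a', 0, 0⟩ = f ⟨a, 0, 0⟩ + f ⟨a', 0, 0⟩ := by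
  obtain ⟨w, hw⟩ := p.fsurj (f ⟨a, 0, 0⟩ + f ⟨a', 0, 0⟩)
  have P : ∀ u v : Tri A M B, h (u * w * v) =
      h (u * ⟨a, 0, 0⟩ * v) + h (u * ⟨a', 0, 0⟩ * v) := by
    intro u v
    rw [p.H2, hw, mul_add, add_mul, ← p.H2, ← p.H2]
  have e12 := P E1 E2
  have e22 := P E2 E2
  rw [corner12, corner12, corner12] at e12
  rw [corner22, corner22, corner22] at e22
  have e12' : h ⟨0, w.mid, 0⟩ = h (0 : Tri A M B) := by
    rw [e12]
    simp only [show (⟨(0:A), (0:M), (0:B)⟩ : Tri A M B) = 0 from rfl, p.h0, add_zero]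
  have e22' : h ⟨0, 0, w.snd⟩ = h (0 : Tri A M B) := by
    rw [e22]
    simp only [show (⟨(0:A), (0:M), (0:B)⟩ : Tri A M B) = 0 from rfl, p.h0, add_zero]
  have hmid : w.mid = 0 := by
    simpa using congrArg Tri.mid (p.hinj e12')
  have hsnd : w.snd = 0 := by
    simpa using congrArg Tri.snd (p.hinj e22')
  have hfst : w.fst = a + a' := by
    have haux : ∀ m : M, w.fst • m = (a + a') • m := by
      intro m
      have e := P E1 ⟨0, m, 0⟩
      have c0 : E1 * w * (⟨0, m, 0⟩ : Tri A M B) = ⟨0, w.fst • m, 0⟩ := by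
        ext <;> simp
      have ca : E1 * (⟨a, (0:M), (0:B)⟩ : Tri A M B) * ⟨0, m, 0⟩ = ⟨0, a • m, 0⟩ := by
        ext <;> simp
      have ca' : E1 * (⟨a', (0:M), (0:B)⟩ : Tri A M B) * ⟨0, m, 0⟩ = ⟨0, a' • m, 0⟩ := by
        ext <;> simp
      rw [c0, ca, ca', ← p.symm.addM] at e
      have := p.hinj e
      rw [Tri.mk.injEq] at this
      rw [this.2.1, add_smul]
    have : (w.fst - (a + a')) = 0 := by
      apply hfA
      intro m
      rw [sub_smul, haux m, sub_self]
    exact sub_eq_zero.mp this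
  have : w = ⟨a + a', 0, 0⟩ := by
    ext <;> simp [hfst, hmid, hsnd]
  rw [← this, hw]

/-- Additivity of `f` on the `B` corner, via faithfulness. -/
theorem Pack.addB (p : Pack f h)
    (hfB : ∀ b : Bᵐᵒᵖ, (∀ m : M, b • m = 0) → b = 0) (b b' : B) :
    f ⟨0, 0, b + b'⟩ = f ⟨0, 0, b⟩ + f ⟨0, 0, b'⟩ := by
  obtain ⟨w, hw⟩ := p.fsurj (f ⟨0, 0, b⟩ + f ⟨0, 0, b'⟩)
  have P : ∀ u v : Tri A M B, h (u * w * v) =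
      h (u * ⟨0, 0, b⟩ * v) + h (u * ⟨0, 0, b'⟩ * v) := by
    intro u v
    rw [p.H2, hw, mul_add, add_mul, ← p.H2, ← p.H2]
  have e11 := P E1 E1
  have e12 := P E1 E2
  rw [corner11, corner11, corner11] at e11
  rw [corner12, corner12, corner12] at e12
  have e11' : h ⟨w.fst, 0, 0⟩ = h (0 : Tri A M B) := by
    rw [e11]
    simp only [show (⟨(0:A), (0:M), (0:B)⟩ : Tri A M B) = 0 from rfl, p.h0, add_zero]
  have e12' : h ⟨0, w.mid, 0⟩ = h (0 : Tri A M B) := by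
    rw [e12]
    simp only [show (⟨(0:A), (0:M), (0:B)⟩ : Tri A M B) = 0 from rfl, p.h0, add_zero]
  have hfst : w.fst = 0 := by
    simpa using congrArg Tri.fst (p.hinj e11')
  have hmid : w.mid = 0 := by
    simpa using congrArg Tri.mid (p.hinj e12')
  have hsnd : w.snd = b + b' := by
    have haux : ∀ m : M, op w.snd • m = op (b + b') • m := by
      intro m
      have e := P ⟨0, m, 0⟩ E2
      have c0 : (⟨(0:A), m, (0:B)⟩ : Tri A M B) * w * E2 = ⟨0, op w.snd • m, 0⟩ := by
        ext <;> simp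
      have cb : (⟨(0:A), m, (0:B)⟩ : Tri A M B) * ⟨0, 0, b⟩ * E2 = ⟨0, op b • m, 0⟩ := by
        ext <;> simp
      have cb' : (⟨(0:A), m, (0:B)⟩ : Tri A M B) * ⟨0, 0, b'⟩ * E2 = ⟨0, op b' • m, 0⟩ := by
        ext <;> simp
      rw [c0, cb, cb', ← p.symm.addM] at e
      have := p.hinj e
      rw [Tri.mk.injEq] at this
      rw [this.2.1, op_add, add_smul]
    have h0 : (op w.snd - op (b + b')) = 0 := by
      apply hfB
      intro m
      rw [sub_smul, haux m, sub_self]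
    have := sub_eq_zero.mp h0
    exact op_injective this
  have : w = ⟨0, 0, b + b'⟩ := by
    ext <;> simp [hfst, hmid, hsnd]
  rw [← this, hw]

/-- Main lemma: `h` is additive. -/
theorem Pack.main (p : Pack f h)
    (hfA : ∀ a : A, (∀ m : M, a • m = 0) → a = 0)
    (hfB : ∀ b : Bᵐᵒᵖ, (∀ m : M, b • m = 0) → b = 0)
    (s t : Tri A M B) : h (s + t) = h s + h t := by
  obtain ⟨w, hw⟩ := p.hsurj (h s + h t)
  have P : ∀ u v : Tri A M B, f (u * w * v) = f (u * s * v) + f (u * t * v) := by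
    intro u v
    rw [p.H1, hw, mul_add, add_mul, ← p.H1, ← p.H1]
  have e11 := P E1 E1
  have e12 := P E1 E2
  have e22 := P E2 E2
  rw [corner11, corner11, corner11, ← p.addA hfA] at e11
  rw [corner12, corner12, corner12, ← p.addM] at e12
  rw [corner22, corner22, corner22, ← p.addB hfB] at e22
  have h1 := p.finj e11
  have h2 := p.finj e12
  have h3 := p.finj e22
  rw [Tri.mk.injEq] at h1 h2 h3
  have hws : w = s + t := by
    ext
    · exact h1.1
    · exact h2.2.1
    · exact h3.2.2
  rw [← hws, hw]

end ElementaryAux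

/-- Elementary surjective maps on triangular algebras over unital algebras are additive. -/
theorem elementary_map_additive_unital
    {R A B M R' : Type*} [CommRing R]
    [Ring A] [Algebra R A] [Ring B] [Algebra R B]
    [AddCommGroup M] [Module R M]
    [Module A M] [Module Bᵐᵒᵖ M] [SMulCommClass A Bᵐᵒᵖ M]
    (hfaithfulA : ∀ a : A, (∀ m : M, a • m = 0) → a = 0)
    (hfaithfulB : ∀ b : Bᵐᵒᵖ, (∀ m : M, b • m = 0) → b = 0)
    [NonUnitalRing R']
    (f : Tri A M B → R') (g : R' → Tri A M B)
    (hf : Function.Surjective f) (hg : Function.Surjective g)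
    (helem : IsElementaryMap f g)
    :
    (∀ s t : Tri A M B, f (s + t) = f s + f t) ∧
    (∀ x y : R', g (x + y) = g x + g y) := by
  obtain ⟨Hel1, Hel2⟩ := helem
  have finj : Function.Injective f := by
    intro s t hst
    have huniv : ∀ u v : Tri A M B, u * s * v = u * t * v := by
      intro u v
      obtain ⟨x, hx⟩ := hg u
      obtain ⟨y, hy⟩ := hg v
      rw [← hx, ← hy, ← Hel2 x y s, ← Hel2 x y t, hst]
    simpa using huniv 1 1
  have ginj : Function.Injective g := by
    intro x y hxy
    obtain ⟨s, hs⟩ := hf x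
    obtain ⟨t, ht⟩ := hf y
    have hzw : ∀ z w : R', z * x * w = z * y * w := by
      intro z w
      obtain ⟨a, ha⟩ := hf z
      obtain ⟨b, hb⟩ := hf w
      rw [← ha, ← hb, ← Hel1 a b x, ← Hel1 a b y, hxy]
    have huniv : ∀ u v : Tri A M B, u * s * v = u * t * v := by
      intro u v
      obtain ⟨z, hz⟩ := hg u
      obtain ⟨w, hw⟩ := hg v
      rw [← hz, ← hw, ← Hel2 z w s, ← Hel2 z w t, hs, ht, hzw z w]
    have hst : s = t := by simpa using huniv 1 1
    rw [← hs, ← ht, hst]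
  let e : R' ≃ Tri A M B := Equiv.ofBijective g ⟨ginj, hg⟩
  let h : Tri A M B → R' := e.symm
  have ghu : ∀ u, g (h u) = u := fun u => e.apply_symm_apply u
  have hgx : ∀ x, h (g x) = x := fun x => e.symm_apply_apply x
  have hinj : Function.Injective h := by
    intro u v huv
    rw [← ghu u, ← ghu v, huv]
  have hsurj : Function.Surjective h := fun x => ⟨g x, hgx x⟩
  have H1 : ∀ a u b : Tri A M B, f (a * u * b) = f a * h u * f b := by
    intro a u b
    have := Hel1 a b (h u)
    rwa [ghu u] at this
  have H2 : ∀ u a v : Tri A M B, h (u * a * v) = h u * f a * h v := by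
    intro u a v
    have h2 := Hel2 (h u) (h v) a
    rw [ghu, ghu] at h2
    calc h (u * a * v) = h (g (h u * f a * h v)) := by rw [h2]
    _ = h u * f a * h v := hgx _
  have p : ElementaryAux.Pack f h := ⟨H1, H2, finj, hinj, hf, hsurj⟩
  constructor
  · exact fun s t => p.symm.main hfaithfulA hfaithfulB s t
  · intro x y
    calc g (x + y) = g (h (g x) + h (g y)) := by rw [hgx, hgx]
    _ = g (h (g x + g y)) := by rw [p.main hfaithfulA hfaithfulB]
    _ = g x + g y := ghu _
end

section
/- (Martindale) Let R be a ring containing a family {e_α : α ∈ Λ} of idempotents such that: (i) xR = {0} implies x = 0; (ii) if e_α R x = {0} for every α ∈ Λ, then x = 0; (iii) for each α ∈ Λ, e_α x e_α R (1 − e_α) = {0} implies e_α x e_α = 0 (interpreted as e_α x e_α r = e_α x e_α r e_α for all r ∈ R when R is not unital). Then any multiplicative bijective map from R onto an arbitrary ring R' is additive. -/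
/-- **Martindale's theorem.** Let `R` be a ring containing a family `{e α : α ∈ Λ}` of
idempotents such that (i) `x R = 0` implies `x = 0`; (ii) `e α * R * x = 0` for all `α`
implies `x = 0`; (iii) for each `α`, `eα x eα R (1 - eα) = 0` implies `eα x eα = 0`
(stated without a unit as `eα x eα r = eα x eα r eα` for all `r`).
Then any multiplicative bijection of `R` onto an arbitrary ring `R'` is additive. -/
theorem martindale_multiplicative_bijective_additive
    {R R' : Type*} [NonUnitalRing R] [NonUnitalRing R']
    {Λ : Type*} (e : Λ → R) (he : ∀ α, e α * e α = e α)
    (h₁ : ∀ x : R, (∀ r : R, x * r = 0) → x = 0)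
    (h₂ : ∀ x : R, (∀ (α : Λ) (r : R), e α * r * x = 0) → x = 0)
    (h₃ : ∀ (α : Λ) (x : R),
      (∀ r : R, e α * x * e α * r = e α * x * e α * r * e α) → e α * x * e α = 0)
    (φ : R → R') (hφ : Function.Bijective φ)
    (hmul : ∀ x y : R, φ (x * y) = φ x * φ y) :
    ∀ x y : R, φ (x + y) = φ x + φ y := by
  obtain ⟨hinj, hsurj⟩ := hφ
  -- φ 0 = 0
  have h0 : φ 0 = 0 := by
    obtain ⟨a, ha⟩ := hsurj 0
    have h : φ (a * 0) = φ a := by rw [hmul, ha, zero_mul]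
    have h' : a * 0 = a := hinj h
    rw [mul_zero] at h'
    rw [← h'] at ha
    exact ha
  -- pair lemma 1 : same row w.r.t. a fixed idempotent, via h₁
  have pair₁ : ∀ (α : Λ) (a b : R), a * e α = a → b * e α = 0 →
      φ (a + b) = φ a + φ b := by
    intro α a b hae hbe
    obtain ⟨s, hs⟩ := hsurj (φ a + φ b)
    suffices hsab : s = a + b by rw [← hsab, hs]
    have key : ∀ t : R, (s - (a + b)) * t = 0 := by
      intro t
      have k1 : s * (e α * t) = a * (e α * t) := by
        apply hinj
        rw [hmul, hs, add_mul, ← hmul, ← hmul]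
        have : b * (e α * t) = 0 := by rw [← mul_assoc, hbe, zero_mul]
        rw [this, h0, add_zero]
      have k2 : s * (t - e α * t) = b * (t - e α * t) := by
        apply hinj
        rw [hmul, hs, add_mul, ← hmul, ← hmul]
        have : a * (t - e α * t) = 0 := by
          rw [mul_sub, ← mul_assoc, hae, sub_self]
        rw [this, h0, zero_add]
      have hb1 : b * (e α * t) = 0 := by rw [← mul_assoc, hbe, zero_mul]
      have ha2 : a * (t - e α * t) = 0 := by
        rw [mul_sub, ← mul_assoc, hae, sub_self]
      have expand : (s - (a + b)) * t
          = (s * (e α * t) - a * (e α * t) - b * (e α * t))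
            + (s * (t - e α * t) - a * (t - e α * t) - b * (t - e α * t)) := by
        noncomm_ring
      rw [expand, k1, k2, hb1, ha2]
      noncomm_ring
    have := h₁ _ key
    exact sub_eq_zero.mp this
  -- pair lemma 2 : same column w.r.t. a fixed idempotent, via h₂
  have pair₂ : ∀ (α : Λ) (a b : R), e α * a = a → e α * b = 0 →
      φ (a + b) = φ a + φ b := by
    intro α a b hea heb
    obtain ⟨s, hs⟩ := hsurj (φ a + φ b)
    suffices hsab : s = a + b by rw [← hsab, hs]
    have key : ∀ t : R, t * (s - (a + b)) = 0 := by
      intro t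
      have k1 : (t * e α) * s = (t * e α) * a := by
        apply hinj
        rw [hmul, hs, mul_add, ← hmul, ← hmul]
        have : (t * e α) * b = 0 := by rw [mul_assoc, heb, mul_zero]
        rw [this, h0, add_zero]
      have k2 : (t - t * e α) * s = (t - t * e α) * b := by
        apply hinj
        rw [hmul, hs, mul_add, ← hmul, ← hmul]
        have : (t - t * e α) * a = 0 := by
          rw [sub_mul, mul_assoc, hea, sub_self]
        rw [this, h0, zero_add]
      have hb1 : (t * e α) * b = 0 := by rw [mul_assoc, heb, mul_zero]
      have ha2 : (t - t * e α) * a = 0 := by rw [sub_mul, mul_assoc, hea, sub_self]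
      have expand : t * (s - (a + b))
          = ((t * e α) * s - (t * e α) * a - (t * e α) * b)
            + ((t - t * e α) * s - (t - t * e α) * a - (t - t * e α) * b) := by
        noncomm_ring
      rw [expand, k1, k2, hb1, ha2]
      noncomm_ring
    have := h₂ _ (fun β r => key (e β * r))
    exact sub_eq_zero.mp this
  -- product additivity lemma
  have prodadd : ∀ p q u v : R, φ (p + q) = φ p + φ q → φ (u + v) = φ u + φ v →
      p * v = 0 → q * u = 0 → φ (p * u + q * v) = φ (p * u) + φ (q * v) := by
    intro p q u v hpq huv hpv hqu
    have hexp : (p + q) * (u + v) = p * u + q * v := by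
      rw [add_mul, mul_add, mul_add, hpv, hqu]
      abel
    calc φ (p * u + q * v) = φ ((p + q) * (u + v)) := by rw [hexp]
      _ = (φ p + φ q) * (φ u + φ v) := by rw [hmul, hpq, huv]
      _ = φ p * φ u + φ p * φ v + (φ q * φ u + φ q * φ v) := by
          rw [add_mul, mul_add, mul_add]
      _ = φ (p * u) + φ (p * v) + (φ (q * u) + φ (q * v)) := by
          rw [← hmul, ← hmul, ← hmul, ← hmul]
      _ = φ (p * u) + φ (q * v) := by rw [hpv, hqu, h0]; abel
  -- additivity on R₁₂
  have c12 : ∀ (α : Λ) (c d : R), e α * c = c → c * e α = 0 →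
      e α * d = d → d * e α = 0 → φ (c + d) = φ c + φ d := by
    intro α c d hec hce hed hde
    obtain ⟨s, hs⟩ := hsurj (φ c + φ d)
    suffices hsab : s = c + d by rw [← hsab, hs]
    have hA : ∀ r, s * (e α * r) = 0 := by
      intro r
      apply hinj
      have hc : c * (e α * r) = 0 := by rw [← mul_assoc, hce, zero_mul]
      have hd : d * (e α * r) = 0 := by rw [← mul_assoc, hde, zero_mul]
      rw [h0, hmul, hs, add_mul, ← hmul, ← hmul, hc, hd, h0, add_zero]
    have hA' : ∀ r, (c + d) * (e α * r) = 0 := by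
      intro r
      rw [add_mul, ← mul_assoc, ← mul_assoc, hce, hde, zero_mul, add_zero]
    have hB : ∀ t, (t - t * e α) * s = 0 := by
      intro t
      apply hinj
      have hc : (t - t * e α) * c = 0 := by rw [sub_mul, mul_assoc, hec, sub_self]
      have hd : (t - t * e α) * d = 0 := by rw [sub_mul, mul_assoc, hed, sub_self]
      rw [h0, hmul, hs, mul_add, ← hmul, ← hmul, hc, hd, h0, add_zero]
    have hB' : ∀ t, (t - t * e α) * (c + d) = 0 := by
      intro t
      rw [mul_add, sub_mul, mul_assoc, hec, sub_self, sub_mul, mul_assoc, hed,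
        sub_self, add_zero]
    have hC : ∀ p, p * e α = p → ∀ r,
        p * s * (r - e α * r) = p * (c + d) * (r - e α * r) := by
      intro p hpe r
      apply hinj
      have h1 : φ (p + p * d) = φ p + φ (p * d) :=
        pair₁ α p (p * d) hpe (by rw [mul_assoc, hde, mul_zero])
      have h2 : φ (c * (r - e α * r) + (r - e α * r))
          = φ (c * (r - e α * r)) + φ (r - e α * r) := by
        apply pair₂ α
        · rw [← mul_assoc, hec]
        · rw [mul_sub, ← mul_assoc, he, sub_self]
      have h3 : p * (r - e α * r) = 0 := by
        rw [← hpe, mul_assoc, mul_sub, ← mul_assoc (e α) (e α) r, he, sub_self, mul_zero]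
      have h4 : (p * d) * (c * (r - e α * r)) = 0 := by
        have hdc : d * c = 0 := by rw [← hec, ← mul_assoc, hde, zero_mul]
        rw [mul_assoc, ← mul_assoc d c, hdc, zero_mul, mul_zero]
      have hpa := prodadd p (p * d) (c * (r - e α * r)) (r - e α * r) h1 h2 h3 h4
      calc φ (p * s * (r - e α * r))
          = φ p * (φ c + φ d) * φ (r - e α * r) := by rw [hmul, hmul, hs]
        _ = φ (p * (c * (r - e α * r))) + φ ((p * d) * (r - e α * r)) := by
            rw [mul_add, add_mul, ← hmul p c, ← hmul p d,
              ← hmul (p * c), ← hmul (p * d), mul_assoc p c]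
        _ = φ (p * (c * (r - e α * r)) + (p * d) * (r - e α * r)) := hpa.symm
        _ = φ (p * (c + d) * (r - e α * r)) := by
            congr 1
            noncomm_ring
    have hD : ∀ p, p * e α = p → p * (s - (c + d)) = 0 := by
      intro p hpe
      apply h₁
      intro r
      have expand : p * (s - (c + d)) * r
          = (p * s * (r - e α * r) - p * (c + d) * (r - e α * r))
            + (p * (s * (e α * r)) - p * ((c + d) * (e α * r))) := by
        noncomm_ring
      rw [expand, hC p hpe r, hA r, hA' r]
      noncomm_ring
    have hE : ∀ t, t * (s - (c + d)) = 0 := by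
      intro t
      have expand : t * (s - (c + d))
          = ((t - t * e α) * s - (t - t * e α) * (c + d))
            + (t * e α) * (s - (c + d)) := by
        noncomm_ring
      rw [expand, hB t, hB' t, hD (t * e α) (by rw [mul_assoc, he])]
      noncomm_ring
    exact sub_eq_zero.mp (h₂ _ (fun β r => hE (e β * r)))
  -- additivity on R₂₁
  have c21 : ∀ (α : Λ) (c d : R), c * e α = c → e α * c = 0 →
      d * e α = d → e α * d = 0 → φ (c + d) = φ c + φ d := by
    intro α c d hce hec hde hed
    obtain ⟨s, hs⟩ := hsurj (φ c + φ d)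
    suffices hsab : s = c + d by rw [← hsab, hs]
    have hA : ∀ r, (r * e α) * s = 0 := by
      intro r
      apply hinj
      have hc : (r * e α) * c = 0 := by rw [mul_assoc, hec, mul_zero]
      have hd : (r * e α) * d = 0 := by rw [mul_assoc, hed, mul_zero]
      rw [h0, hmul, hs, mul_add, ← hmul, ← hmul, hc, hd, h0, add_zero]
    have hA' : ∀ r, (r * e α) * (c + d) = 0 := by
      intro r
      rw [mul_add, mul_assoc, mul_assoc, hec, hed, mul_zero, add_zero]
    have hB : ∀ t, s * (t - e α * t) = 0 := by
      intro t
      apply hinj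
      have hc : c * (t - e α * t) = 0 := by rw [mul_sub, ← mul_assoc, hce, sub_self]
      have hd : d * (t - e α * t) = 0 := by rw [mul_sub, ← mul_assoc, hde, sub_self]
      rw [h0, hmul, hs, add_mul, ← hmul, ← hmul, hc, hd, h0, add_zero]
    have hB' : ∀ t, (c + d) * (t - e α * t) = 0 := by
      intro t
      rw [add_mul, mul_sub, ← mul_assoc, hce, sub_self, mul_sub, ← mul_assoc, hde,
        sub_self, add_zero]
    have hC : ∀ p, e α * p = p → ∀ t,
        (t - t * e α) * s * p = (t - t * e α) * (c + d) * p := by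
      intro p hep t
      apply hinj
      have h1 : φ ((t - t * e α) * c + (t - t * e α)) = φ ((t - t * e α) * c) + φ (t - t * e α) := by
        apply pair₁ α
        · rw [mul_assoc, hce]
        · rw [sub_mul, mul_assoc t (e α) (e α), he, sub_self]
      have h2 : φ (p + d * p) = φ p + φ (d * p) :=
        pair₂ α p (d * p) hep (by rw [← mul_assoc, hed, zero_mul])
      have h3 : ((t - t * e α) * c) * (d * p) = 0 := by
        have hcd : c * d = 0 := by rw [← hce, mul_assoc, hed, mul_zero]
        rw [mul_assoc, ← mul_assoc c d p, hcd, zero_mul, mul_zero]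
      have h4 : (t - t * e α) * p = 0 := by
        rw [← hep, ← mul_assoc, sub_mul, mul_assoc t (e α) (e α), he, sub_self, zero_mul]
      have hpa := prodadd ((t - t * e α) * c) (t - t * e α) p (d * p) h1 h2 h3 h4
      calc φ ((t - t * e α) * s * p)
          = φ (t - t * e α) * (φ c + φ d) * φ p := by rw [hmul, hmul, hs]
        _ = φ (((t - t * e α) * c) * p) + φ ((t - t * e α) * (d * p)) := by
            rw [mul_add, add_mul, ← hmul (t - t * e α) c, ← hmul (t - t * e α) d,
              ← hmul ((t - t * e α) * c), ← hmul ((t - t * e α) * d),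
              mul_assoc (t - t * e α) d]
        _ = φ (((t - t * e α) * c) * p + (t - t * e α) * (d * p)) := hpa.symm
        _ = φ ((t - t * e α) * (c + d) * p) := by
            congr 1
            noncomm_ring
    have hD : ∀ q, e α * q = q → (s - (c + d)) * q = 0 := by
      intro q heq
      apply h₂
      intro β r
      have expand : e β * r * ((s - (c + d)) * q)
          = ((e β * r - (e β * r) * e α) * s * q - (e β * r - (e β * r) * e α) * (c + d) * q)
            + (((e β * r) * e α) * s * q - ((e β * r) * e α) * (c + d) * q) := by
        noncomm_ring
      rw [expand, hC q heq (e β * r), hA (e β * r), hA' (e β * r)]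
      noncomm_ring
    have hE : ∀ t, (s - (c + d)) * t = 0 := by
      intro t
      have expand : (s - (c + d)) * t
          = (s * (t - e α * t) - (c + d) * (t - e α * t))
            + (s - (c + d)) * (e α * t) := by
        noncomm_ring
      rw [expand, hB t, hB' t, hD (e α * t) (by rw [← mul_assoc, he])]
      noncomm_ring
    exact sub_eq_zero.mp (h₁ _ hE)
  -- additivity on R₁₁ (uses h₃)
  have c11 : ∀ (α : Λ) (c d : R), e α * c = c → c * e α = c →
      e α * d = d → d * e α = d → φ (c + d) = φ c + φ d := by
    intro α c d hec hce hed hde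
    obtain ⟨s, hs⟩ := hsurj (φ c + φ d)
    suffices hsab : s = c + d by rw [← hsab, hs]
    have hse : s * e α = s := by
      apply hinj
      rw [hmul, hs, add_mul, ← hmul, ← hmul, hce, hde]
    have hes : e α * s = s := by
      apply hinj
      rw [hmul, hs, mul_add, ← hmul, ← hmul, hec, hed]
    have hK1 : ∀ r, s * (r - e α * r) = 0 := by
      intro r
      apply hinj
      have hc : c * (r - e α * r) = 0 := by rw [mul_sub, ← mul_assoc, hce, sub_self]
      have hd : d * (r - e α * r) = 0 := by rw [mul_sub, ← mul_assoc, hde, sub_self]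
      rw [h0, hmul, hs, add_mul, ← hmul, ← hmul, hc, hd, h0, add_zero]
    have hK1' : ∀ r, (c + d) * (r - e α * r) = 0 := by
      intro r
      rw [add_mul, mul_sub, ← mul_assoc, hce, sub_self, mul_sub, ← mul_assoc, hde,
        sub_self, add_zero]
    have hXe : ∀ r, (e α * r - e α * r * e α) * e α = 0 := by
      intro r
      rw [sub_mul, mul_assoc (e α * r) (e α) (e α), he, sub_self]
    have hK2 : ∀ r, s * (e α * r - e α * r * e α) = (c + d) * (e α * r - e α * r * e α) := by
      intro r
      apply hinj
      have hh1 : e α * (c * (e α * r - e α * r * e α)) = c * (e α * r - e α * r * e α) := by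
        rw [← mul_assoc, hec]
      have hh2 : (c * (e α * r - e α * r * e α)) * e α = 0 := by
        rw [mul_assoc, hXe, mul_zero]
      have hh3 : e α * (d * (e α * r - e α * r * e α)) = d * (e α * r - e α * r * e α) := by
        rw [← mul_assoc, hed]
      have hh4 : (d * (e α * r - e α * r * e α)) * e α = 0 := by
        rw [mul_assoc, hXe, mul_zero]
      calc φ (s * (e α * r - e α * r * e α))
          = (φ c + φ d) * φ (e α * r - e α * r * e α) := by rw [hmul, hs]
        _ = φ (c * (e α * r - e α * r * e α)) + φ (d * (e α * r - e α * r * e α)) := by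
            rw [add_mul, ← hmul, ← hmul]
        _ = φ (c * (e α * r - e α * r * e α) + d * (e α * r - e α * r * e α)) :=
            (c12 α _ _ hh1 hh2 hh3 hh4).symm
        _ = φ ((c + d) * (e α * r - e α * r * e α)) := by rw [add_mul]
    have hzr : ∀ r, (s - (c + d)) * r = (s - (c + d)) * (e α * r * e α) := by
      intro r
      have key : (s - (c + d)) * r - (s - (c + d)) * (e α * r * e α)
          = (s * (r - e α * r) - (c + d) * (r - e α * r))
            + (s * (e α * r - e α * r * e α) - (c + d) * (e α * r - e α * r * e α)) := by
        noncomm_ring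
      have key2 : (s - (c + d)) * r - (s - (c + d)) * (e α * r * e α) = 0 := by
        rw [key, hK1 r, hK1' r, hK2 r]
        noncomm_ring
      exact sub_eq_zero.mp key2
    have hzz : e α * (s - (c + d)) * e α = s - (c + d) := by
      have l1 : e α * (s - (c + d)) = s - (c + d) := by
        rw [mul_sub, mul_add, hes, hec, hed]
      rw [l1, sub_mul, add_mul, hse, hce, hde]
    have hyp : ∀ r : R, e α * (s - (c + d)) * e α * r
        = e α * (s - (c + d)) * e α * r * e α := by
      intro r
      rw [hzz, mul_assoc (s - (c + d)) r (e α), hzr r, hzr (r * e α)]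
      congr 1
      rw [← mul_assoc (e α) r (e α), mul_assoc (e α * r) (e α) (e α), he]
    have hz0 : e α * (s - (c + d)) * e α = 0 := h₃ α _ hyp
    rw [hzz] at hz0
    exact sub_eq_zero.mp hz0
  -- row additivity
  have row : ∀ (α : Λ) (u v : R), e α * u = u → e α * v = v → φ (u + v) = φ u + φ v := by
    intro α u v hu hv
    have split : ∀ w : R, e α * w = w → φ w = φ (w * e α) + φ (w - w * e α) := by
      intro w hw
      have h := pair₁ α (w * e α) (w - w * e α)
        (by rw [mul_assoc, he]) (by rw [sub_mul, mul_assoc, he, sub_self])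
      rw [← h]
      congr 1
      abel
    have h11 : φ (u * e α + v * e α) = φ (u * e α) + φ (v * e α) := by
      apply c11 α
      · rw [← mul_assoc, hu]
      · rw [mul_assoc, he]
      · rw [← mul_assoc, hv]
      · rw [mul_assoc, he]
    have h12 : φ ((u - u * e α) + (v - v * e α)) = φ (u - u * e α) + φ (v - v * e α) := by
      apply c12 α
      · rw [mul_sub, ← mul_assoc, hu]
      · rw [sub_mul, mul_assoc, he, sub_self]
      · rw [mul_sub, ← mul_assoc, hv]
      · rw [sub_mul, mul_assoc, he, sub_self]
    have pa : (u * e α + v * e α) * e α = u * e α + v * e α := by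
      rw [add_mul, mul_assoc, he, mul_assoc, he]
    have pb : ((u - u * e α) + (v - v * e α)) * e α = 0 := by
      rw [add_mul, sub_mul, mul_assoc, he, sub_self, sub_mul, mul_assoc, he, sub_self,
        add_zero]
    calc φ (u + v)
        = φ ((u * e α + v * e α) + ((u - u * e α) + (v - v * e α))) := by
          congr 1; abel
      _ = φ (u * e α + v * e α) + φ ((u - u * e α) + (v - v * e α)) := pair₁ α _ _ pa pb
      _ = (φ (u * e α) + φ (v * e α)) + (φ (u - u * e α) + φ (v - v * e α)) := by
          rw [h11, h12]
      _ = (φ (u * e α) + φ (u - u * e α)) + (φ (v * e α) + φ (v - v * e α)) := by abel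
      _ = φ u + φ v := by rw [← split u hu, ← split v hv]
  -- final reduction
  intro x y
  obtain ⟨s, hs⟩ := hsurj (φ x + φ y)
  suffices hsxy : s = x + y by rw [← hsxy, hs]
  have key : ∀ (β : Λ) (r : R), e β * r * (s - (x + y)) = 0 := by
    intro β r
    have k : e β * r * s = e β * r * x + e β * r * y := by
      apply hinj
      rw [hmul, hs, mul_add, ← hmul, ← hmul]
      exact (row β (e β * r * x) (e β * r * y)
        (by rw [← mul_assoc, ← mul_assoc, he]) (by rw [← mul_assoc, ← mul_assoc, he])).symm
    rw [mul_sub, mul_add, k, sub_self]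
  exact sub_eq_zero.mp (h₂ _ key)
end

section
/- Every multiplicative bijective map from a prime ring containing a nontrivial idempotent onto an arbitrary ring is additive. -/
/-- Every multiplicative bijective map from a prime ring containing a nontrivial
idempotent onto an arbitrary ring is additive. -/
theorem multiplicative_bijective_on_prime_ring_additive
    {R R' : Type*} [NonUnitalRing R] [NonUnitalRing R']
    (hprime : ∀ a b : R, (∀ r : R, a * r * b = 0) → a = 0 ∨ b = 0)
    (e : R) (he : e * e = e) (he₀ : e ≠ 0)
    (he₁ : ¬ ∀ x : R, e * x = x ∧ x * e = x)
    (φ : R → R') (hφ : Function.Bijective φ)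
    (hmul : ∀ x y : R, φ (x * y) = φ x * φ y) :
    ∀ x y : R, φ (x + y) = φ x + φ y := by
  obtain ⟨hinj, hsurj⟩ := hφ
  -- φ 0 = 0
  have h0 : φ (0 : R) = 0 := by
    have h1 : ∀ s : R', φ 0 * s = φ 0 := by
      intro s
      obtain ⟨x, rfl⟩ := hsurj s
      rw [← hmul, zero_mul]
    have h3 := h1 0
    rw [mul_zero] at h3
    exact h3.symm
  -- annihilator lemmas from primeness
  have hT0r : ∀ t : R, (∀ r, t * r = 0) → t = 0 := by
    intro t ht
    rcases hprime t e (fun r => by rw [mul_assoc]; exact ht _) with h | h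
    · exact h
    · exact absurd h he₀
  have hT0l : ∀ t : R, (∀ r, r * t = 0) → t = 0 := by
    intro t ht
    rcases hprime e t (fun r => ht (e * r)) with h | h
    · exact absurd h he₀
    · exact h
  -- a nonzero witness with e*t = 0 or t*e = 0
  have hw : ∃ t : R, t ≠ 0 ∧ (e * t = 0 ∨ t * e = 0) := by
    push_neg at he₁
    obtain ⟨x, hx⟩ := he₁
    by_cases h1 : e * x = x
    · refine ⟨x - x * e, ?_, Or.inr ?_⟩
      · exact sub_ne_zero.mpr (Ne.symm (hx h1))
      · rw [sub_mul, mul_assoc, he, sub_self]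
    · refine ⟨x - e * x, ?_, Or.inl ?_⟩
      · exact sub_ne_zero.mpr (fun h => h1 h.symm)
      · rw [mul_sub, ← mul_assoc, he, sub_self]
  -- key primeness lemma: u r = u r e for all r implies u = 0
  have hT2 : ∀ u : R, (∀ r, u * r = u * r * e) → u = 0 := by
    intro u hu
    obtain ⟨t, ht0, ht⟩ := hw
    have key : ∀ r, u * r * t = 0 := by
      intro r
      rcases ht with h | h
      · calc u * r * t = u * r * e * t := by conv_lhs => rw [hu r]
          _ = u * r * (e * t) := by rw [mul_assoc]
          _ = 0 := by rw [h, mul_zero]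
      · calc u * r * t = u * (r * t) := by rw [mul_assoc]
          _ = u * (r * t) * e := hu (r * t)
          _ = u * (r * (t * e)) := by rw [mul_assoc, mul_assoc]
          _ = 0 := by rw [h, mul_zero, mul_zero]
    rcases hprime u t key with h | h
    · exact h
    · exact absurd h ht0
  -- the "c-argument" helpers
  have hR : ∀ c a b : R, φ c = φ a + φ b → ∀ z, φ (c * z) = φ (a * z) + φ (b * z) := by
    intro c a b hc z
    rw [hmul c z, hc, add_mul, ← hmul a z, ← hmul b z]
  have hL : ∀ c a b : R, φ c = φ a + φ b → ∀ z, φ (z * c) = φ (z * a) + φ (z * b) := by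
    intro c a b hc z
    rw [hmul z c, hc, mul_add, ← hmul z a, ← hmul z b]
  have hLR : ∀ c a b : R, φ c = φ a + φ b → ∀ x z,
      φ (x * c * z) = φ (x * a * z) + φ (x * b * z) := by
    intro c a b hc x z
    calc φ (x * c * z) = φ x * φ c * φ z := by rw [hmul (x * c) z, hmul x c]
      _ = φ x * (φ a + φ b) * φ z := by rw [hc]
      _ = φ x * φ a * φ z + φ x * φ b * φ z := by rw [mul_add, add_mul]
      _ = φ (x * a * z) + φ (x * b * z) := by
          rw [← hmul x a, ← hmul (x * a) z, ← hmul x b, ← hmul (x * b) z]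
  -- Lemma A: a*e = a, b*e = 0 implies additivity
  have hA : ∀ a b : R, a * e = a → b * e = 0 → φ (a + b) = φ a + φ b := by
    intro a b ha hb
    obtain ⟨c, hc⟩ := hsurj (φ a + φ b)
    have key : ∀ s, c * s = a * s + b * s := by
      intro s
      have h1 : c * (e * s) = a * s := by
        have h := hR c a b hc (e * s)
        rw [show b * (e * s) = 0 from by rw [← mul_assoc, hb, zero_mul],
            show a * (e * s) = a * s from by rw [← mul_assoc, ha], h0, add_zero] at h
        exact hinj h
      have h2 : c * (s - e * s) = b * s := by
        have h := hR c a b hc (s - e * s)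
        rw [show a * (s - e * s) = 0 from by rw [mul_sub, ← mul_assoc, ha, sub_self],
            show b * (s - e * s) = b * s from by
              rw [mul_sub, ← mul_assoc, hb, zero_mul, sub_zero], h0, zero_add] at h
        exact hinj h
      calc c * s = c * (e * s) + c * (s - e * s) := by rw [← mul_add]; congr 1; abel
        _ = a * s + b * s := by rw [h1, h2]
    have hc' : c = a + b := by
      have h1 : ∀ s, (c - (a + b)) * s = 0 := by
        intro s
        rw [sub_mul, add_mul, key, sub_self]
      have h := hT0r _ h1
      rwa [sub_eq_zero] at h
    rw [← hc']
    exact hc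
  -- Lemma B: e*a = a, e*b = 0 implies additivity
  have hB : ∀ a b : R, e * a = a → e * b = 0 → φ (a + b) = φ a + φ b := by
    intro a b ha hb
    obtain ⟨c, hc⟩ := hsurj (φ a + φ b)
    have key : ∀ s, s * c = s * a + s * b := by
      intro s
      have h1 : (s * e) * c = s * a := by
        have h := hL c a b hc (s * e)
        rw [show s * e * b = 0 from by rw [mul_assoc, hb, mul_zero],
            show s * e * a = s * a from by rw [mul_assoc, ha], h0, add_zero] at h
        exact hinj h
      have h2 : (s - s * e) * c = s * b := by
        have h := hL c a b hc (s - s * e)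
        rw [show (s - s * e) * a = 0 from by rw [sub_mul, mul_assoc, ha, sub_self],
            show (s - s * e) * b = s * b from by
              rw [sub_mul, mul_assoc, hb, mul_zero, sub_zero], h0, zero_add] at h
        exact hinj h
      calc s * c = (s * e) * c + (s - s * e) * c := by rw [← add_mul]; congr 1; abel
        _ = s * a + s * b := by rw [h1, h2]
    have hc' : c = a + b := by
      have h1 : ∀ s, s * (c - (a + b)) = 0 := by
        intro s
        rw [mul_sub, mul_add, key, sub_self]
      have h := hT0l _ h1
      rwa [sub_eq_zero] at h
    rw [← hc']
    exact hc
  -- Lemma C: additivity of p*q + u*v for p column-1, u column-2, q row-1, v row-2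
  have hC : ∀ p u q v : R, p * e = p → u * e = 0 → e * q = q → e * v = 0 →
      φ (p * q + u * v) = φ (p * q) + φ (u * v) := by
    intro p u q v hp hu hq hv
    have hpv : p * v = 0 := by
      calc p * v = p * e * v := by rw [hp]
        _ = 0 := by rw [mul_assoc, hv, mul_zero]
    have huq : u * q = 0 := by
      calc u * q = u * (e * q) := by rw [hq]
        _ = 0 := by rw [← mul_assoc, hu, zero_mul]
    have key : (p + u) * (q + v) = p * q + u * v := by
      rw [add_mul, mul_add, mul_add, hpv, huq]
      abel
    calc φ (p * q + u * v) = φ ((p + u) * (q + v)) := by rw [key]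
      _ = φ (p + u) * φ (q + v) := hmul _ _
      _ = (φ p + φ u) * (φ q + φ v) := by rw [hA p u hp hu, hB q v hq hv]
      _ = φ p * φ q + φ p * φ v + (φ u * φ q + φ u * φ v) := by rw [add_mul, mul_add, mul_add]
      _ = φ (p * q) + φ (u * v) := by
          rw [← hmul p q, ← hmul p v, ← hmul u q, ← hmul u v, hpv, huq, h0]
          abel
  -- additivity on R₁₂
  have P12 : ∀ a b : R, e * a = a → a * e = 0 → e * b = b → b * e = 0 →
      φ (a + b) = φ a + φ b := by
    intro a b ha1 ha2 hb1 hb2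
    obtain ⟨c, hc⟩ := hsurj (φ a + φ b)
    have hce : c * e = 0 := by
      apply hT0r
      intro s
      have h := hR c a b hc (e * s)
      rw [show a * (e * s) = 0 from by rw [← mul_assoc, ha2, zero_mul],
          show b * (e * s) = 0 from by rw [← mul_assoc, hb2, zero_mul], h0, add_zero] at h
      rw [mul_assoc]
      exact hinj (h.trans h0.symm)
    have hec : e * c = c := by
      have h5 : ∀ x, x * (c - e * c) = 0 := by
        intro x
        have h := hL c a b hc (x - x * e)
        rw [show (x - x * e) * a = 0 from by rw [sub_mul, mul_assoc, ha1, sub_self],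
            show (x - x * e) * b = 0 from by rw [sub_mul, mul_assoc, hb1, sub_self],
            h0, add_zero] at h
        have h2 : (x - x * e) * c = 0 := hinj (h.trans h0.symm)
        rw [sub_mul, mul_assoc] at h2
        rw [mul_sub]
        exact h2
      have h6 := hT0l _ h5
      rw [sub_eq_zero] at h6
      exact h6.symm
    have s4 : ∀ y, e * y = 0 → y * e = 0 → (c - a - b) * y = 0 := by
      intro y hy1 hy2
      have key : ∀ s, e * s * ((c - a - b) * y) = 0 := by
        intro s
        have h := hLR c a b hc (e * s * e) y
        have hadd := hC (e * s * e) (e * s * e * a) (b * y) y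
          (by rw [mul_assoc (e * s), he])
          (by rw [mul_assoc, ha2, mul_zero])
          (by rw [← mul_assoc, hb1])
          hy1
        rw [show e * s * e * b * y = e * s * e * (b * y) from mul_assoc _ _ _] at h
        rw [add_comm] at h
        have hE : e * s * e * c * y = e * s * e * (b * y) + e * s * e * a * y :=
          hinj (h.trans hadd.symm)
        have E1 : e * s * e * c * y = e * s * (c * y) := by
          rw [mul_assoc (e * s) e c, hec, mul_assoc]
        have E2 : e * s * e * a * y = e * s * (a * y) := by
          rw [mul_assoc (e * s) e a, ha1, mul_assoc]
        have E3 : e * s * e * (b * y) = e * s * (b * y) := by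
          rw [mul_assoc (e * s) e (b * y), ← mul_assoc e b y, hb1]
        calc e * s * ((c - a - b) * y)
            = e * s * (c * y) - e * s * (a * y) - e * s * (b * y) := by
              rw [sub_mul, sub_mul, mul_sub, mul_sub]
          _ = e * s * e * c * y - e * s * e * a * y - e * s * e * (b * y) := by
              rw [E1, E2, E3]
          _ = 0 := by rw [hE]; abel
      rcases hprime e ((c - a - b) * y) key with h | h
      · exact absurd h he₀
      · exact h
    have htE : ∀ s, (c - a - b) * s = (c - a - b) * s * e := by
      intro s
      have hez : e * (s - e * s) = 0 := by rw [mul_sub, ← mul_assoc, he, sub_self]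
      have hey : e * ((s - e * s) - (s - e * s) * e) = 0 := by
        rw [mul_sub, ← mul_assoc, hez, zero_mul, sub_zero]
      have hye : ((s - e * s) - (s - e * s) * e) * e = 0 := by
        rw [sub_mul, mul_assoc, he, sub_self]
      have hty := s4 ((s - e * s) - (s - e * s) * e) hey hye
      have hte : (c - a - b) * e = 0 := by
        rw [sub_mul, sub_mul, hce, ha2, hb2, sub_zero, sub_zero]
      have htz : (c - a - b) * (s - e * s) = (c - a - b) * s := by
        rw [mul_sub, ← mul_assoc, hte, zero_mul, sub_zero]
      have h7 : (c - a - b) * (s - e * s) - (c - a - b) * (s - e * s) * e = 0 := by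
        rw [mul_assoc, ← mul_sub]
        exact hty
      rw [htz] at h7
      exact (sub_eq_zero.mp h7)
    have ht := hT2 _ htE
    rw [sub_sub, sub_eq_zero] at ht
    rw [← ht]
    exact hc
  -- additivity on R₂₂
  have P22 : ∀ a b : R, e * a = 0 → a * e = 0 → e * b = 0 → b * e = 0 →
      φ (a + b) = φ a + φ b := by
    intro a b ha1 ha2 hb1 hb2
    obtain ⟨c, hc⟩ := hsurj (φ a + φ b)
    have hec : e * c = 0 := by
      apply hT0l
      intro s
      have h := hL c a b hc (s * e)
      rw [show s * e * a = 0 from by rw [mul_assoc, ha1, mul_zero],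
          show s * e * b = 0 from by rw [mul_assoc, hb1, mul_zero], h0, add_zero] at h
      have h2 : s * e * c = 0 := hinj (h.trans h0.symm)
      rw [← mul_assoc]
      exact h2
    have key : ∀ s, e * s * (c - a - b) = 0 := by
      intro s
      have hx1 : e * (e * s - e * s * e) = e * s - e * s * e := by
        rw [mul_sub, ← mul_assoc e e s, he, ← mul_assoc e (e * s) e, ← mul_assoc e e s, he]
      have hx2 : (e * s - e * s * e) * e = 0 := by
        rw [sub_mul, mul_assoc (e * s) e e, he, sub_self]
      have h := hL c a b hc (e * s - e * s * e)
      have hadd := P12 ((e * s - e * s * e) * a) ((e * s - e * s * e) * b)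
        (by rw [← mul_assoc, hx1]) (by rw [mul_assoc, ha2, mul_zero])
        (by rw [← mul_assoc, hx1]) (by rw [mul_assoc, hb2, mul_zero])
      have hxt : (e * s - e * s * e) * (c - a - b) = 0 := by
        have h2 : (e * s - e * s * e) * c
            = (e * s - e * s * e) * a + (e * s - e * s * e) * b :=
          hinj (h.trans hadd.symm)
        rw [mul_sub, mul_sub, h2]
        abel
      have het : e * (c - a - b) = 0 := by
        rw [mul_sub, mul_sub, hec, ha1, hb1, sub_zero, sub_zero]
      have h3 : e * s * (c - a - b) - e * s * e * (c - a - b) = 0 := by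
        rw [← sub_mul]
        exact hxt
      rw [show e * s * e * (c - a - b) = 0 from by rw [mul_assoc (e * s) e, het, mul_zero],
          sub_zero] at h3
      exact h3
    rcases hprime e (c - a - b) key with h | h
    · exact absurd h he₀
    · rw [sub_sub, sub_eq_zero] at h
      rw [← h]
      exact hc
  -- additivity on R₂₁
  have P21 : ∀ a b : R, e * a = 0 → a * e = a → e * b = 0 → b * e = b →
      φ (a + b) = φ a + φ b := by
    intro a b ha1 ha2 hb1 hb2
    obtain ⟨c, hc⟩ := hsurj (φ a + φ b)
    have hce : c * e = c := by
      have h5 : ∀ s, (c - c * e) * s = 0 := by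
        intro s
        have h := hR c a b hc (s - e * s)
        rw [show a * (s - e * s) = 0 from by rw [mul_sub, ← mul_assoc, ha2, sub_self],
            show b * (s - e * s) = 0 from by rw [mul_sub, ← mul_assoc, hb2, sub_self],
            h0, add_zero] at h
        have h2 : c * (s - e * s) = 0 := hinj (h.trans h0.symm)
        rw [mul_sub, ← mul_assoc] at h2
        rw [sub_mul]
        exact h2
      have h6 := hT0r _ h5
      rw [sub_eq_zero] at h6
      exact h6.symm
    have htE : ∀ s, (c - a - b) * s = (c - a - b) * s * e := by
      intro s
      have hy1 : e * (e * s - e * s * e) = e * s - e * s * e := by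
        rw [mul_sub, ← mul_assoc e e s, he, ← mul_assoc e (e * s) e, ← mul_assoc e e s, he]
      have hy2 : (e * s - e * s * e) * e = 0 := by
        rw [sub_mul, mul_assoc (e * s) e e, he, sub_self]
      have h := hR c a b hc (e * s - e * s * e)
      have hadd := P22 (a * (e * s - e * s * e)) (b * (e * s - e * s * e))
        (by rw [← mul_assoc, ha1, zero_mul]) (by rw [mul_assoc, hy2, mul_zero])
        (by rw [← mul_assoc, hb1, zero_mul]) (by rw [mul_assoc, hy2, mul_zero])
      have hxt : (c - a - b) * (e * s - e * s * e) = 0 := by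
        have h2 : c * (e * s - e * s * e)
            = a * (e * s - e * s * e) + b * (e * s - e * s * e) :=
          hinj (h.trans hadd.symm)
        rw [sub_mul, sub_mul, h2]
        abel
      have hte : (c - a - b) * e = c - a - b := by
        rw [sub_mul, sub_mul, hce, ha2, hb2]
      have h3 : (c - a - b) * (e * s) - (c - a - b) * (e * s * e) = 0 := by
        rw [← mul_sub]
        exact hxt
      rw [← mul_assoc, hte, ← mul_assoc (c - a - b) (e * s) e, ← mul_assoc, hte] at h3
      exact sub_eq_zero.mp h3
    have ht := hT2 _ htE
    rw [sub_sub, sub_eq_zero] at ht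
    rw [← ht]
    exact hc
  -- additivity on R₁₁
  have P11 : ∀ a b : R, e * a = a → a * e = a → e * b = b → b * e = b →
      φ (a + b) = φ a + φ b := by
    intro a b ha1 ha2 hb1 hb2
    obtain ⟨c, hc⟩ := hsurj (φ a + φ b)
    have hce : c * e = c := by
      have h5 : ∀ s, (c - c * e) * s = 0 := by
        intro s
        have h := hR c a b hc (s - e * s)
        rw [show a * (s - e * s) = 0 from by rw [mul_sub, ← mul_assoc, ha2, sub_self],
            show b * (s - e * s) = 0 from by rw [mul_sub, ← mul_assoc, hb2, sub_self],
            h0, add_zero] at h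
        have h2 : c * (s - e * s) = 0 := hinj (h.trans h0.symm)
        rw [mul_sub, ← mul_assoc] at h2
        rw [sub_mul]
        exact h2
      have h6 := hT0r _ h5
      rw [sub_eq_zero] at h6
      exact h6.symm
    have htE : ∀ s, (c - a - b) * s = (c - a - b) * s * e := by
      intro s
      have hy1 : e * (e * s - e * s * e) = e * s - e * s * e := by
        rw [mul_sub, ← mul_assoc e e s, he, ← mul_assoc e (e * s) e, ← mul_assoc e e s, he]
      have hy2 : (e * s - e * s * e) * e = 0 := by
        rw [sub_mul, mul_assoc (e * s) e e, he, sub_self]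
      have h := hR c a b hc (e * s - e * s * e)
      have hadd := P12 (a * (e * s - e * s * e)) (b * (e * s - e * s * e))
        (by rw [← mul_assoc, ha1]) (by rw [mul_assoc, hy2, mul_zero])
        (by rw [← mul_assoc, hb1]) (by rw [mul_assoc, hy2, mul_zero])
      have hxt : (c - a - b) * (e * s - e * s * e) = 0 := by
        have h2 : c * (e * s - e * s * e)
            = a * (e * s - e * s * e) + b * (e * s - e * s * e) :=
          hinj (h.trans hadd.symm)
        rw [sub_mul, sub_mul, h2]
        abel
      have hte : (c - a - b) * e = c - a - b := by
        rw [sub_mul, sub_mul, hce, ha2, hb2]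
      have h3 : (c - a - b) * (e * s) - (c - a - b) * (e * s * e) = 0 := by
        rw [← mul_sub]
        exact hxt
      rw [← mul_assoc, hte, ← mul_assoc (c - a - b) (e * s) e, ← mul_assoc, hte] at h3
      exact sub_eq_zero.mp h3
    have ht := hT2 _ htE
    rw [sub_sub, sub_eq_zero] at ht
    rw [← ht]
    exact hc
  -- decomposition helpers
  have hd1 : ∀ z : R, φ z = φ (z * e) + φ (z - z * e) := by
    intro z
    have h := hA (z * e) (z - z * e) (by rw [mul_assoc, he])
      (by rw [sub_mul, mul_assoc, he, sub_self])
    rwa [show z * e + (z - z * e) = z from by abel] at h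
  have hd2 : ∀ z : R, φ z = φ (e * z) + φ (z - e * z) := by
    intro z
    have h := hB (e * z) (z - e * z) (by rw [← mul_assoc, he])
      (by rw [mul_sub, ← mul_assoc, he, sub_self])
    rwa [show e * z + (z - e * z) = z from by abel] at h
  -- additivity within column 1
  have hcol1 : ∀ u v : R, u * e = u → v * e = v → φ (u + v) = φ u + φ v := by
    intro u v hu hv
    have m1 : φ (e * u + e * v) = φ (e * u) + φ (e * v) :=
      P11 (e * u) (e * v) (by rw [← mul_assoc, he]) (by rw [mul_assoc, hu])
        (by rw [← mul_assoc, he]) (by rw [mul_assoc, hv])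
    have m2 : φ ((u - e * u) + (v - e * v)) = φ (u - e * u) + φ (v - e * v) :=
      P21 (u - e * u) (v - e * v)
        (by rw [mul_sub, ← mul_assoc, he, sub_self])
        (by rw [sub_mul, hu, mul_assoc, hu])
        (by rw [mul_sub, ← mul_assoc, he, sub_self])
        (by rw [sub_mul, hv, mul_assoc, hv])
    calc φ (u + v) = φ (e * (u + v)) + φ ((u + v) - e * (u + v)) := hd2 (u + v)
      _ = φ (e * u + e * v) + φ ((u - e * u) + (v - e * v)) := by
          rw [mul_add, show (u + v) - (e * u + e * v) = (u - e * u) + (v - e * v) from by abel]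
      _ = φ (e * u) + φ (e * v) + (φ (u - e * u) + φ (v - e * v)) := by rw [m1, m2]
      _ = (φ (e * u) + φ (u - e * u)) + (φ (e * v) + φ (v - e * v)) := by abel
      _ = φ u + φ v := by rw [← hd2 u, ← hd2 v]
  -- additivity within column 2
  have hcol2 : ∀ u v : R, u * e = 0 → v * e = 0 → φ (u + v) = φ u + φ v := by
    intro u v hu hv
    have m1 : φ (e * u + e * v) = φ (e * u) + φ (e * v) :=
      P12 (e * u) (e * v) (by rw [← mul_assoc, he]) (by rw [mul_assoc, hu, mul_zero])
        (by rw [← mul_assoc, he]) (by rw [mul_assoc, hv, mul_zero])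
    have m2 : φ ((u - e * u) + (v - e * v)) = φ (u - e * u) + φ (v - e * v) :=
      P22 (u - e * u) (v - e * v)
        (by rw [mul_sub, ← mul_assoc, he, sub_self])
        (by rw [sub_mul, hu, mul_assoc, hu, mul_zero, sub_zero])
        (by rw [mul_sub, ← mul_assoc, he, sub_self])
        (by rw [sub_mul, hv, mul_assoc, hv, mul_zero, sub_zero])
    calc φ (u + v) = φ (e * (u + v)) + φ ((u + v) - e * (u + v)) := hd2 (u + v)
      _ = φ (e * u + e * v) + φ ((u - e * u) + (v - e * v)) := by
          rw [mul_add, show (u + v) - (e * u + e * v) = (u - e * u) + (v - e * v) from by abel]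
      _ = φ (e * u) + φ (e * v) + (φ (u - e * u) + φ (v - e * v)) := by rw [m1, m2]
      _ = (φ (e * u) + φ (u - e * u)) + (φ (e * v) + φ (v - e * v)) := by abel
      _ = φ u + φ v := by rw [← hd2 u, ← hd2 v]
  -- final assembly
  intro x y
  calc φ (x + y) = φ ((x + y) * e) + φ ((x + y) - (x + y) * e) := hd1 (x + y)
    _ = φ (x * e + y * e) + φ ((x - x * e) + (y - y * e)) := by
        rw [add_mul, show (x + y) - (x * e + y * e) = (x - x * e) + (y - y * e) from by abel]
    _ = (φ (x * e) + φ (y * e)) + (φ (x - x * e) + φ (y - y * e)) := by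
        rw [hcol1 (x * e) (y * e) (by rw [mul_assoc, he]) (by rw [mul_assoc, he]),
            hcol2 (x - x * e) (y - y * e) (by rw [sub_mul, mul_assoc, he, sub_self])
              (by rw [sub_mul, mul_assoc, he, sub_self])]
    _ = (φ (x * e) + φ (x - x * e)) + (φ (y * e) + φ (y - y * e)) := by abel
    _ = φ x + φ y := by rw [← hd1 x, ← hd1 y]
end
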